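/- Let f : (0,∞) → (0,∞) be operator monotone, let A and B be positive definite complex Hermitian n×n matrices, and let C be an invertible complex n×n matrix. Then C (A m_f B) C* = (C A C*) m_f (C B C*). -/

import Mathlib

open Matrix ComplexOrder

/-- Functional calculus for (Hermitian) matrices: apply `f` to each eigenvalue. -/
noncomputable def herCFC {n : ℕ} (f : ℝ → ℝ) (A : Matrix (Fin n) (Fin n) ℂ) :
    Matrix (Fin n) (Fin n) ℂ :=
  if h : A.IsHermitian then
    (h.eigenvectorUnitary : Matrix (Fin n) (Fin n) ℂ) *
      Matrix.diagonal (fun i => (f (h.eigenvalues i) : ℂ)) *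
      (star (h.eigenvectorUnitary : Matrix (Fin n) (Fin n) ℂ))
  else 0

/-- `f : (0,∞) → (0,∞)` is operator monotone. -/
def OperatorMonotone (f : ℝ → ℝ) : Prop :=
  (∀ x : ℝ, 0 < x → 0 < f x) ∧
  ∀ (n : ℕ) (A B : Matrix (Fin n) (Fin n) ℂ), A.PosDef → B.PosDef →
    (B - A).PosSemidef → (herCFC f B - herCFC f A).PosSemidef

/-- The square root `A^{1/2}` of a (positive semidefinite Hermitian) matrix. -/
noncomputable def matSqrt {n : ℕ} (A : Matrix (Fin n) (Fin n) ℂ) :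
    Matrix (Fin n) (Fin n) ℂ :=
  herCFC Real.sqrt A

/-- The operator mean `A m_f B = A^{1/2} · f (A^{-1/2} B A^{-1/2}) · A^{1/2}`. -/
noncomputable def matMean {n : ℕ} (f : ℝ → ℝ) (A B : Matrix (Fin n) (Fin n) ℂ) :
    Matrix (Fin n) (Fin n) ℂ :=
  matSqrt A * herCFC f ((matSqrt A)⁻¹ * B * (matSqrt A)⁻¹) * matSqrt A


section Stmt19Aux

variable {n : ℕ}

lemma herCFC_eq_cfc {f : ℝ → ℝ} {A : Matrix (Fin n) (Fin n) ℂ} (hA : A.IsHermitian) :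
    herCFC f A = cfc f A := by
  rw [hA.cfc_eq]
  simp only [herCFC, dif_pos hA, Matrix.IsHermitian.cfc]
  rfl

noncomputable def conjSAH (U : Matrix (Fin n) (Fin n) ℂ)
    (hU : U ∈ unitary (Matrix (Fin n) (Fin n) ℂ)) :
    Matrix (Fin n) (Fin n) ℂ →⋆ₐ[ℂ] Matrix (Fin n) (Fin n) ℂ where
  toFun x := U * x * star U
  map_one' := by
    show U * 1 * star U = 1
    rw [mul_one, (Unitary.mem_iff.mp hU).2]
  map_mul' x y := by
    show U * (x * y) * star U = U * x * star U * (U * y * star U)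
    have h := (Unitary.mem_iff.mp hU).1
    simp only [mul_assoc]
    rw [← mul_assoc (star U) U, h, one_mul]
  map_zero' := by show U * 0 * star U = 0; simp
  map_add' x y := by
    show U * (x + y) * star U = U * x * star U + U * y * star U
    rw [mul_add, add_mul]
  commutes' c := by
    show U * algebraMap ℂ _ c * star U = algebraMap ℂ _ c
    simp only [Algebra.algebraMap_eq_smul_one, mul_smul_comm, smul_mul_assoc, mul_one,
      (Unitary.mem_iff.mp hU).2]
  map_star' x := by
    show U * star x * star U = star (U * x * star U)
    simp only [StarMul.star_mul, star_star, mul_assoc]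

lemma herCFC_unitary_conj (f : ℝ → ℝ) {a U : Matrix (Fin n) (Fin n) ℂ}
    (ha : a.IsHermitian) (hU : U ∈ unitary (Matrix (Fin n) (Fin n) ℂ)) :
    herCFC f (U * a * star U) = U * herCFC f a * star U := by
  have ha' : (U * a * star U).IsHermitian := by
    rw [star_eq_conjTranspose]
    exact Matrix.isHermitian_mul_mul_conjTranspose U ha
  have hfin : (spectrum ℝ a).Finite :=
    ha.spectrum_real_eq_range_eigenvalues ▸ Set.finite_range _
  haveI : CompactSpace (spectrum ℝ a) := isCompact_iff_compactSpace.mp hfin.isCompact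
  haveI : Finite (spectrum ℝ a) := hfin
  have hcont : ContinuousOn f (spectrum ℝ a) := by
    rw [continuousOn_iff_continuous_restrict]
    exact continuous_of_discreteTopology
  have hsa : _root_.IsSelfAdjoint a := ha
  have hsa' : _root_.IsSelfAdjoint (U * a * star U) := ha'
  have hφ : Continuous (conjSAH U hU) :=
    (continuous_const.matrix_mul continuous_id).matrix_mul continuous_const
  have := StarAlgHomClass.map_cfc (S := ℂ) (conjSAH U hU) f a hcont hφ hsa hsa'
  rw [herCFC_eq_cfc ha, herCFC_eq_cfc ha']
  exact ((this).symm.trans rfl)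


lemma herCFC_isHermitian (f : ℝ → ℝ) (A : Matrix (Fin n) (Fin n) ℂ) :
    (herCFC f A).IsHermitian := by
  unfold herCFC
  split
  · next h =>
    have hD : (Matrix.diagonal (fun i => (f (h.eigenvalues i) : ℂ))).IsHermitian := by
      rw [Matrix.IsHermitian, diagonal_conjTranspose]
      congr 1
      ext i
      simp [Pi.star_def]
    rw [star_eq_conjTranspose]
    exact Matrix.isHermitian_mul_mul_conjTranspose _ hD
  · exact Matrix.isHermitian_zero

lemma herCFC_congr {f g : ℝ → ℝ} {A : Matrix (Fin n) (Fin n) ℂ} (hA : A.IsHermitian)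
    (h : ∀ i, f (hA.eigenvalues i) = g (hA.eigenvalues i)) :
    herCFC f A = herCFC g A := by
  simp only [herCFC, dif_pos hA]
  have : (fun i => (f (hA.eigenvalues i) : ℂ)) = fun i => (g (hA.eigenvalues i) : ℂ) :=
    funext fun i => by rw [h i]
  rw [this]

lemma herCFC_mul (f g : ℝ → ℝ) {A : Matrix (Fin n) (Fin n) ℂ} (hA : A.IsHermitian) :
    herCFC f A * herCFC g A = herCFC (fun x => f x * g x) A := by
  simp only [herCFC, dif_pos hA]
  have h1 : (star (hA.eigenvectorUnitary : Matrix (Fin n) (Fin n) ℂ)) *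
      (hA.eigenvectorUnitary : Matrix (Fin n) (Fin n) ℂ) = 1 :=
    Matrix.mem_unitaryGroup_iff'.mp hA.eigenvectorUnitary.2
  simp only [mul_assoc]
  rw [← mul_assoc (star (hA.eigenvectorUnitary : Matrix (Fin n) (Fin n) ℂ)), h1, one_mul,
    ← mul_assoc (Matrix.diagonal _), diagonal_mul_diagonal]
  congr 2
  ext i
  push_cast
  ring

lemma herCFC_id {A : Matrix (Fin n) (Fin n) ℂ} (hA : A.IsHermitian) :
    herCFC id A = A := by
  simp only [herCFC, dif_pos hA]
  conv_rhs => rw [hA.spectral_theorem]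
  rfl

lemma posDef_conj {A : Matrix (Fin n) (Fin n) ℂ} (hA : A.PosDef)
    {C : Matrix (Fin n) (Fin n) ℂ} (hC : IsUnit C) : (C * A * Cᴴ).PosDef := by
  refine Matrix.posDef_iff_dotProduct_mulVec.mpr ⟨Matrix.isHermitian_mul_mul_conjTranspose C hA.1, fun x hx => ?_⟩
  have hCH : IsUnit Cᴴ := by rw [← star_eq_conjTranspose]; exact hC.star
  have hy : Cᴴ *ᵥ x ≠ 0 := by
    have hinj : Function.Injective (Cᴴ.mulVec) :=
      Matrix.mulVec_injective_iff_isUnit.mpr hCH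
    simpa using (hinj.ne_iff' (Matrix.mulVec_zero Cᴴ)).mpr hx
  have key : star x ⬝ᵥ ((C * A * Cᴴ) *ᵥ x) = star (Cᴴ *ᵥ x) ⬝ᵥ (A *ᵥ (Cᴴ *ᵥ x)) := by
    rw [star_mulVec, conjTranspose_conjTranspose, Matrix.mulVec_mulVec,
      Matrix.dotProduct_mulVec, Matrix.dotProduct_mulVec, Matrix.vecMul_vecMul, mul_assoc]
  rw [key]
  exact (Matrix.posDef_iff_dotProduct_mulVec.mp hA).2 hy

lemma herCFC_posDef {f : ℝ → ℝ} {A : Matrix (Fin n) (Fin n) ℂ} (hA : A.IsHermitian)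
    (hf : ∀ i, 0 < f (hA.eigenvalues i)) : (herCFC f A).PosDef := by
  rw [herCFC, dif_pos hA]
  have hd : (Matrix.diagonal (fun i => (f (hA.eigenvalues i) : ℂ))).PosDef := by
    rw [Matrix.posDef_diagonal_iff]
    intro i
    exact_mod_cast hf i
  have hU : IsUnit (hA.eigenvectorUnitary : Matrix (Fin n) (Fin n) ℂ) := by
    apply Matrix.isUnit_iff_isUnit_det _ |>.mpr
    have h1 : (star (hA.eigenvectorUnitary : Matrix (Fin n) (Fin n) ℂ)) *
        (hA.eigenvectorUnitary : Matrix (Fin n) (Fin n) ℂ) = 1 :=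
      Matrix.mem_unitaryGroup_iff'.mp hA.eigenvectorUnitary.2
    have h2 := congrArg Matrix.det h1
    rw [Matrix.det_mul, Matrix.det_one, mul_comm] at h2
    exact IsUnit.of_mul_eq_one _ h2
  have := posDef_conj hd hU
  rwa [← star_eq_conjTranspose] at this


lemma matSqrt_posDef {A : Matrix (Fin n) (Fin n) ℂ} (hA : A.PosDef) : (matSqrt A).PosDef :=
  herCFC_posDef hA.1 (fun i => Real.sqrt_pos.mpr (hA.eigenvalues_pos i))

lemma matSqrt_mul_self {A : Matrix (Fin n) (Fin n) ℂ} (hA : A.PosDef) :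
    matSqrt A * matSqrt A = A := by
  rw [matSqrt, herCFC_mul _ _ hA.1,
    herCFC_congr hA.1 (g := id)
      (fun i => Real.mul_self_sqrt (hA.eigenvalues_pos i).le),
    herCFC_id hA.1]

end Stmt19Aux

/-- invariance of the operator mean under congruence by an invertible
matrix: `C (A m_f B) Cᴴ = (C A Cᴴ) m_f (C B Cᴴ)`. -/
theorem stmt19 (f : ℝ → ℝ) (hf : OperatorMonotone f)
    {n : ℕ} (A B : Matrix (Fin n) (Fin n) ℂ) (hA : A.PosDef) (hB : B.PosDef)
    (C : Matrix (Fin n) (Fin n) ℂ) (hC : IsUnit C) :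
    C * matMean f A B * Cᴴ = matMean f (C * A * Cᴴ) (C * B * Cᴴ) := by
  simp only [matMean]
  set S := matSqrt A with hSdef
  have hS : S.PosDef := matSqrt_posDef hA
  have hSS : S * S = A := matSqrt_mul_self hA
  have hSu : IsUnit S := hS.isUnit
  have hSd : IsUnit S.det := (Matrix.isUnit_iff_isUnit_det S).mp hSu
  have hA' : (C * A * Cᴴ).PosDef := posDef_conj hA hC
  set T := matSqrt (C * A * Cᴴ) with hTdef
  have hT : T.PosDef := matSqrt_posDef hA'
  have hTT : T * T = C * A * Cᴴ := matSqrt_mul_self hA'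
  have hTu : IsUnit T := hT.isUnit
  have hTd : IsUnit T.det := (Matrix.isUnit_iff_isUnit_det T).mp hTu
  have hSH : star S = S := by rw [star_eq_conjTranspose, hS.1.eq]
  have hTiH : star T⁻¹ = T⁻¹ := by
    rw [star_eq_conjTranspose, Matrix.conjTranspose_nonsing_inv, hT.1.eq]
  set U := T⁻¹ * C * S with hUdef
  have hUstar : star U = S * Cᴴ * T⁻¹ := by
    rw [hUdef, StarMul.star_mul, StarMul.star_mul, hSH, hTiH, star_eq_conjTranspose C,
      mul_assoc]
  have hUU : U * star U = 1 := by
    rw [hUstar, hUdef]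
    calc T⁻¹ * C * S * (S * Cᴴ * T⁻¹) = T⁻¹ * (C * (S * S) * Cᴴ) * T⁻¹ := by
          simp only [mul_assoc]
      _ = T⁻¹ * (T * T) * T⁻¹ := by rw [hSS, hTT]
      _ = 1 := by
          simp only [mul_assoc]
          rw [Matrix.mul_nonsing_inv _ hTd, mul_one, Matrix.nonsing_inv_mul _ hTd]
  have hUmem : U ∈ unitary (Matrix (Fin n) (Fin n) ℂ) :=
    Unitary.mem_iff.mpr ⟨mul_eq_one_comm.mp hUU, hUU⟩
  have hSiH : (S⁻¹)ᴴ = S⁻¹ := by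
    rw [Matrix.conjTranspose_nonsing_inv, hS.1.eq]
  have hX : (S⁻¹ * B * S⁻¹).IsHermitian := by
    rw [Matrix.IsHermitian]
    simp only [Matrix.conjTranspose_mul, hSiH, hB.1.eq, Matrix.mul_assoc]
  have hkey : T⁻¹ * (C * B * Cᴴ) * T⁻¹ = U * (S⁻¹ * B * S⁻¹) * star U := by
    rw [hUstar, hUdef]
    simp only [mul_assoc]
    rw [← mul_assoc S S⁻¹, Matrix.mul_nonsing_inv _ hSd, one_mul,
      ← mul_assoc S⁻¹ S, Matrix.nonsing_inv_mul _ hSd, one_mul]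
  rw [hkey, herCFC_unitary_conj f hX hUmem, hUstar, hUdef]
  simp only [← mul_assoc]
  rw [Matrix.mul_nonsing_inv _ hTd]
  rw [mul_assoc _ T⁻¹ T, Matrix.nonsing_inv_mul _ hTd, mul_one, one_mul]
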